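/- Let k be an infinite field and S = k[x_1, ..., x_e] a polynomial ring with the standard grading. Let I ⊆ S be a homogeneous ideal and h ∈ I a nonzero homogeneous element whose degree is minimal among the degrees of all nonzero homogeneous elements of I. Then there exist linear forms ℓ_2, ..., ℓ_e in S forming a regular sequence on S such that h ∉ (ℓ_2, ..., ℓ_e) and every homogeneous element of I + (ℓ_2, ..., ℓ_e) that does not lie in (ℓ_2, ..., ℓ_e) has degree at least deg h. -/

import Mathlib

open MvPolynomial

section Aux

lemma aux_X_mul_mem {σ R : Type*} [CommRing R] {s : Set σ} {t : σ} (ht : t ∉ s)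
    {p : MvPolynomial σ R} (hp : X t * p ∈ Ideal.span (X '' s : Set (MvPolynomial σ R))) :
    p ∈ Ideal.span (X '' s : Set (MvPolynomial σ R)) := by
  rw [mem_ideal_span_X_image] at hp ⊢
  intro m hm
  have hmem : m + Finsupp.single t 1 ∈ (X t * p).support := by
    rw [mem_support_iff, add_comm, coeff_X_mul]
    exact mem_support_iff.mp hm
  obtain ⟨i, his, hi⟩ := hp _ hmem
  have hit : i ≠ t := fun h => ht (h ▸ his)
  exact ⟨i, his, by simpa [Finsupp.single_apply, hit.symm] using hi⟩

lemma aux_take_ofFn {σ R : Type*} [CommRing R] {n : ℕ} (g : Fin n → σ) (i : ℕ) :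
    Ideal.ofList ((List.ofFn (fun m => (X (g m) : MvPolynomial σ R))).take i)
      = Ideal.span (X '' (g '' {m : Fin n | (m : ℕ) < i})) := by
  unfold Ideal.ofList
  congr 1
  ext r
  simp only [List.mem_take_iff_getElem, List.getElem_ofFn, Set.mem_setOf_eq, Set.mem_image,
    List.length_ofFn]
  constructor
  · rintro ⟨j, hj, rfl⟩
    exact ⟨g ⟨j, (lt_min_iff.mp hj).2⟩, ⟨⟨j, _⟩, (lt_min_iff.mp hj).1, rfl⟩, rfl⟩
  · rintro ⟨_, ⟨m, hm, rfl⟩, rfl⟩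
    exact ⟨m, lt_min hm m.isLt, rfl⟩

lemma aux_one_not_mem {σ R : Type*} [CommRing R] [Nontrivial R] (s : Set σ) :
    (1 : MvPolynomial σ R) ∉ Ideal.span (X '' s : Set (MvPolynomial σ R)) := by
  rw [mem_ideal_span_X_image]
  intro H
  obtain ⟨i, _, hi⟩ := H 0 (mem_support_iff.mpr (by simp))
  simp at hi

lemma aux_vars_regular {σ R : Type*} [CommRing R] [Nontrivial R] {n : ℕ}
    {g : Fin n → σ} (hg : Function.Injective g) :
    RingTheory.Sequence.IsRegular (MvPolynomial σ R)
      (List.ofFn fun i => (X (g i) : MvPolynomial σ R)) := by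
  constructor
  · rw [RingTheory.Sequence.isWeaklyRegular_iff]
    intro i hi
    rw [aux_take_ofFn, Submodule.span_smul_eq, Submodule.set_smul_top_eq_span]
    intro x y hxy
    obtain ⟨p, rfl⟩ := Submodule.Quotient.mk_surjective _ x
    obtain ⟨q, rfl⟩ := Submodule.Quotient.mk_surjective _ y
    simp only at hxy
    rw [← Submodule.Quotient.mk_smul, ← Submodule.Quotient.mk_smul,
      Submodule.Quotient.eq] at hxy
    rw [Submodule.Quotient.eq]
    simp only [List.getElem_ofFn, smul_eq_mul] at hxy
    rw [← mul_sub] at hxy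
    have hlen : i < n := by simpa using hi
    have ht : g (⟨i, hlen⟩ : Fin n) ∉ (g '' {m : Fin n | (m : ℕ) < i}) := by
      rintro ⟨m, hm, hgm⟩
      have := hg hgm
      subst this
      simp at hm
    exact aux_X_mul_mem ht hxy
  · intro htop
    have h1 : Ideal.ofList (List.ofFn fun i => (X (g i) : MvPolynomial σ R))
        = Ideal.span (X '' (g '' {m : Fin n | (m : ℕ) < n})) := by
      conv_lhs => rw [← List.take_length (l := List.ofFn fun i => (X (g i) : MvPolynomial σ R)),
        List.length_ofFn, aux_take_ofFn]
    rw [h1, Submodule.span_smul_eq, Submodule.set_smul_top_eq_span] at htop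
    exact aux_one_not_mem _ (htop ▸ Submodule.mem_top : (1 : MvPolynomial σ R) ∈ _)

lemma aux_comp_mul {σ R : Type*} [CommRing R] (c ℓ : MvPolynomial σ R) {d : ℕ} (n : ℕ)
    (hl : ℓ.IsHomogeneous d) :
    ∃ c', homogeneousComponent n (c * ℓ) = c' * ℓ := by
  refine ⟨∑ i ∈ Finset.range (c.totalDegree + 1),
    if n = i + d then homogeneousComponent i c else 0, ?_⟩
  conv_lhs => rw [← sum_homogeneousComponent c, Finset.sum_mul, map_sum]
  rw [Finset.sum_mul]
  refine Finset.sum_congr rfl fun i _ => ?_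
  rw [homogeneousComponent_of_mem ((mem_homogeneousSubmodule (i + d) _).mpr
    ((homogeneousComponent_isHomogeneous i c).mul hl))]
  by_cases hn : n = i + d <;> simp [hn]

lemma aux_comp_span {σ R ι : Type*} [CommRing R] [Fintype ι] {ℓ : ι → MvPolynomial σ R}
    {d : ℕ} (hl : ∀ i, (ℓ i).IsHomogeneous d) {q : MvPolynomial σ R}
    (hq : q ∈ Ideal.span (Set.range ℓ)) (n : ℕ) :
    homogeneousComponent n q ∈ Ideal.span (Set.range ℓ) := by
  rw [Ideal.span, Finsupp.mem_span_range_iff_exists_finsupp] at hq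
  obtain ⟨c, rfl⟩ := hq
  rw [Finsupp.sum, map_sum]
  refine Ideal.sum_mem _ fun i _ => ?_
  obtain ⟨c', hc'⟩ := aux_comp_mul (c i) (ℓ i) n (hl i)
  rw [smul_eq_mul, hc']
  exact Ideal.mul_mem_left _ _ (Ideal.subset_span ⟨i, rfl⟩)

lemma aux_deg {σ R ι : Type*} [CommRing R] [Fintype ι] {I : Ideal (MvPolynomial σ R)}
    (hIhom : ∀ p ∈ I, ∀ n : ℕ, (homogeneousComponent n) p ∈ I)
    {dh : ℕ}
    (hmin : ∀ g ∈ I, g ≠ 0 → ∀ n : ℕ, g.IsHomogeneous n → dh ≤ n)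
    {ℓ : ι → MvPolynomial σ R} (hl : ∀ i, (ℓ i).IsHomogeneous 1) :
    ∀ g ∈ I ⊔ Ideal.span (Set.range ℓ), g ∉ Ideal.span (Set.range ℓ) →
      ∀ n : ℕ, g.IsHomogeneous n → dh ≤ n := by
  intro g hg hgn n hgh
  obtain ⟨p, hp, q, hq, rfl⟩ := Submodule.mem_sup.mp hg
  have hcomp : homogeneousComponent n (p + q) = p + q := by
    rw [homogeneousComponent_of_mem ((mem_homogeneousSubmodule n _).mpr hgh), if_pos rfl]
  rw [map_add] at hcomp
  have hp' : homogeneousComponent n p ∈ I := hIhom p hp n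
  have hq' : homogeneousComponent n q ∈ Ideal.span (Set.range ℓ) := aux_comp_span hl hq n
  have hpne : homogeneousComponent n p ≠ 0 := by
    rintro h0
    rw [h0, zero_add] at hcomp
    exact hgn (hcomp ▸ hq')
  exact hmin _ hp' hpne n (homogeneousComponent_isHomogeneous n p)

noncomputable section Phi
variable {k : Type*} [Field k] {n : ℕ}

def phiF (j : Fin (n+1)) (u : k) (b : Fin (n+1) → k) : Fin (n+1) → MvPolynomial (Fin (n+1)) k :=
  fun m => if m = j then X j else C u * X m - C (b m) * X j

def psiF (j : Fin (n+1)) (u : k) (b : Fin (n+1) → k) : Fin (n+1) → MvPolynomial (Fin (n+1)) k :=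
  fun m => if m = j then X j else C u⁻¹ * (X m + C (b m) * X j)

lemma phi_psi (j : Fin (n+1)) (u : k) (hu : u ≠ 0) (b : Fin (n+1) → k) :
    (aeval (phiF j u b)).comp (aeval (psiF j u b)) = AlgHom.id k (MvPolynomial (Fin (n+1)) k)
    ∧ (aeval (psiF j u b)).comp (aeval (phiF j u b)) = AlgHom.id k (MvPolynomial (Fin (n+1)) k) := by
  constructor <;>
  · apply algHom_ext
    intro m
    by_cases hm : m = j
    · simp [phiF, psiF, hm]
    · simp only [AlgHom.coe_comp, Function.comp_apply, aeval_X, AlgHom.coe_id, id_eq,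
        phiF, psiF, if_neg hm, if_pos rfl, map_mul, map_add, map_sub, aeval_C,
        algebraMap_eq]
      simp only [if_true]
      ring_nf
      simp [← C_mul, inv_mul_cancel₀ hu, mul_inv_cancel₀ hu]

lemma aux_regular_map {R A : Type*} [CommRing R] [CommRing A] [Algebra R A] (φ : A ≃ₐ[R] A)
    {m : ℕ} (f : Fin m → A) (hreg : RingTheory.Sequence.IsRegular A (List.ofFn f)) :
    RingTheory.Sequence.IsRegular A (List.ofFn fun i => φ (f i)) := by
  have hrel : List.Forall₂
      (fun r s => ∀ x, φ.toRingEquiv.toAddEquiv (r • x) = s • φ.toRingEquiv.toAddEquiv x)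
      (List.ofFn f) (List.ofFn fun i => φ (f i)) := by
    rw [show (List.ofFn fun i => φ (f i)) = (List.ofFn f).map φ by rw [List.map_ofFn]; rfl]
    exact List.forall₂_map_right_iff.mpr (List.forall₂_same.mpr fun r _ x => by
      simp [smul_eq_mul, map_mul])
  exact (AddEquiv.isRegular_congr hrel).mp hreg

end Phi
end Aux

/-- **Lemma 3.1.** Let `k` be an infinite field and `S = k[x_1, …, x_e]` a standard graded
polynomial ring.  If `I ⊆ S` is a homogeneous ideal and `h ∈ I` is a nonzero homogeneous
element of minimal degree among nonzero homogeneous elements of `I`, then there is a regular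
sequence of linear forms `ℓ_2, …, ℓ_e` such that `h ∉ (ℓ_2, …, ℓ_e)` and every homogeneous
element of `I + (ℓ_2, …, ℓ_e)` not lying in `(ℓ_2, …, ℓ_e)` has degree at least `deg h`. -/
theorem stmt0 (k : Type*) [Field k] [Infinite k] (e : ℕ)
    (I : Ideal (MvPolynomial (Fin e) k))
    (hIhom : ∀ p ∈ I, ∀ n : ℕ, (homogeneousComponent n) p ∈ I)
    (h : MvPolynomial (Fin e) k) (hhI : h ∈ I) (hh0 : h ≠ 0) (dh : ℕ)
    (hhom : h.IsHomogeneous dh)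
    (hmin : ∀ g ∈ I, g ≠ 0 → ∀ n : ℕ, g.IsHomogeneous n → dh ≤ n) :
    ∃ ℓ : Fin (e - 1) → MvPolynomial (Fin e) k,
      (∀ i, (ℓ i).IsHomogeneous 1) ∧
      RingTheory.Sequence.IsRegular (MvPolynomial (Fin e) k) (List.ofFn ℓ) ∧
      h ∉ Ideal.span (Set.range ℓ) ∧
      (∀ g ∈ I ⊔ Ideal.span (Set.range ℓ), g ∉ Ideal.span (Set.range ℓ) →
        ∀ n : ℕ, g.IsHomogeneous n → dh ≤ n) := by
  obtain ⟨a, ha⟩ : ∃ a : Fin e → k, eval a h ≠ 0 := by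
    by_contra hc
    push_neg at hc
    exact hh0 (hhom.eq_zero_of_forall_eval_eq_zero hc)
  cases e with
  | zero =>
    refine ⟨Fin.elim0, fun i => i.elim0, ?_, ?_, aux_deg hIhom hmin (fun i => i.elim0)⟩
    · rw [List.ofFn_zero]
      exact RingTheory.Sequence.IsRegular.nil _ _
    · haveI : IsEmpty (Fin (0 - 1)) := inferInstanceAs (IsEmpty (Fin 0))
      rw [Set.range_eq_empty, Ideal.span_empty]
      simpa using hh0
  | succ n =>
    obtain ⟨j, u, hu, b, hub⟩ : ∃ (j : Fin (n+1)) (u : k), u ≠ 0 ∧ ∃ b : Fin (n+1) → k,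
        ∀ m, u * a m = b m * a j := by
      by_cases hA : ∀ m, a m = 0
      · exact ⟨0, 1, one_ne_zero, 0, fun m => by simp [hA m]⟩
      · push_neg at hA
        obtain ⟨j, hj⟩ := hA
        exact ⟨j, a j, hj, a, fun m => mul_comm _ _⟩
    refine ⟨fun i => C u * X (j.succAbove i) - C (b (j.succAbove i)) * X j, ?_, ?_, ?_, ?_⟩
    · intro i
      exact (isHomogeneous_C_mul_X u _).sub (isHomogeneous_C_mul_X _ j)
    · have hfun : (fun i : Fin (n + 1 - 1) =>
          (C u * X (j.succAbove i) - C (b (j.succAbove i)) * X j : MvPolynomial (Fin (n+1)) k))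
          = fun i : Fin n => (AlgEquiv.ofAlgHom (aeval (phiF j u b)) (aeval (psiF j u b))
            (phi_psi j u hu b).1 (phi_psi j u hu b).2) (X (j.succAbove i)) := by
        funext i
        show _ = (aeval (phiF j u b)) (X (j.succAbove i))
        simp [phiF, Fin.succAbove_ne j i]
      rw [hfun]
      exact aux_regular_map _ (fun i : Fin n => X (j.succAbove i))
        (aux_vars_regular (Fin.succAbove_right_injective (p := j)))
    · intro hmem
      have hsub : Ideal.span (Set.range fun i : Fin (n + 1 - 1) =>
          (C u * X (j.succAbove i) - C (b (j.succAbove i)) * X j : MvPolynomial (Fin (n+1)) k))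
          ≤ RingHom.ker (eval a) := by
        rw [Ideal.span_le]
        rintro _ ⟨i, rfl⟩
        rw [SetLike.mem_coe, RingHom.mem_ker]
        simp only [map_sub, map_mul, eval_C, eval_X]
        rw [hub (j.succAbove i)]
        ring
      exact ha (hsub hmem)
    · exact aux_deg hIhom hmin (fun i =>
        (isHomogeneous_C_mul_X u _).sub (isHomogeneous_C_mul_X _ j))
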